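/- Let m ∈ ℕ with m ≥ 1, let Δ > 0 and ε > 0, and let ν = Gumbel(2Δ/ε) be the Gumbel measure with scale 2Δ/ε. For scores s : Fin m → ℝ and an index i, let A_i(s) = {η ∈ ℝ^m : ∀ j ≠ i, s(i) + η(i) > s(j) + η(j)}. Then for all s, s' : Fin m → ℝ with |s(j) − s'(j)| ≤ Δ for every j, and every index i: ν^{⊗m}(A_i(s)) ≤ exp(ε) · ν^{⊗m}(A_i(s')). (Report-Noisy-Max with Gumbel noise of scale 2Δ/ε, i.e., the exponential mechanism, satisfies ε-differential privacy.) -/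

import Mathlib

open MeasureTheory
open ENNReal

/-- The Gumbel measure `Gumbel(β)` with scale `β`, with density
`x ↦ (1/β)·exp(−x/β − exp(−x/β))` with respect to Lebesgue measure. -/
noncomputable def gumbelMeasure (β : ℝ) : Measure ℝ :=
  volume.withDensity fun x =>
    ENNReal.ofReal (1 / β * Real.exp (-x / β - Real.exp (-x / β)))

instance gumbelMeasure.sigmaFinite (β : ℝ) : SigmaFinite (gumbelMeasure β) := by
  unfold gumbelMeasure
  infer_instance

lemma gumbel_density_meas (β : ℝ) :
    Measurable fun x : ℝ => ENNReal.ofReal (1 / β * Real.exp (-x / β - Real.exp (-x / β))) := by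
  fun_prop

/-- Pointwise density shift bound. -/
lemma gumbel_density_shift (β ε : ℝ) (hβ : 0 < β) (hε : 0 ≤ ε) (x : ℝ) :
    1 / β * Real.exp (-(x - ε * β) / β - Real.exp (-(x - ε * β) / β)) ≤
      Real.exp ε * (1 / β * Real.exp (-x / β - Real.exp (-x / β))) := by
  have hb : -(x - ε * β) / β = -x / β + ε := by field_simp; ring
  rw [hb]
  have h1 : Real.exp (-x / β + ε) = Real.exp ε * Real.exp (-x / β) := by
    rw [← Real.exp_add]; ring_nf
  have h2 : Real.exp (-x / β) ≤ Real.exp ε * Real.exp (-x / β) := by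
    nlinarith [Real.one_le_exp hε, Real.exp_pos (-x / β)]
  have h3 : Real.exp (-x / β + ε - Real.exp (-x / β + ε)) ≤
      Real.exp (-x / β + ε - Real.exp (-x / β)) := by
    apply Real.exp_le_exp.2
    rw [h1]; linarith
  have h4 : Real.exp (-x / β + ε - Real.exp (-x / β)) =
      Real.exp ε * Real.exp (-x / β - Real.exp (-x / β)) := by
    rw [← Real.exp_add]; ring_nf
  have hβ' : 0 ≤ 1 / β := by positivity
  calc 1 / β * Real.exp (-x / β + ε - Real.exp (-x / β + ε))
      ≤ 1 / β * (Real.exp ε * Real.exp (-x / β - Real.exp (-x / β))) := by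
        rw [← h4]; exact mul_le_mul_of_nonneg_left h3 hβ'
    _ = Real.exp ε * (1 / β * Real.exp (-x / β - Real.exp (-x / β))) := by ring

/-- The pushforward of the Gumbel measure under translation by `ε·β` is bounded by
`exp ε` times the Gumbel measure. -/
lemma gumbel_map_le (β ε : ℝ) (hβ : 0 < β) (hε : 0 ≤ ε) :
    Measure.map (fun x : ℝ => x + ε * β) (gumbelMeasure β) ≤
      ENNReal.ofReal (Real.exp ε) • gumbelMeasure β := by
  set c := ε * β with hc
  set g : ℝ → ℝ≥0∞ := fun x => ENNReal.ofReal (1 / β * Real.exp (-x / β - Real.exp (-x / β)))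
    with hg
  have hgm : Measurable g := gumbel_density_meas β
  refine Measure.le_intro fun B hB _ => ?_
  rw [Measure.map_apply (measurable_add_const c) hB]
  have hpre : MeasurableSet ((fun x : ℝ => x + c) ⁻¹' B) :=
    (measurable_add_const c) hB
  rw [Measure.smul_apply, smul_eq_mul]
  unfold gumbelMeasure
  rw [withDensity_apply _ hpre, withDensity_apply _ hB]
  have key : ∀ x : ℝ, ((fun x : ℝ => x + c) ⁻¹' B).indicator g x
      = B.indicator (fun y => g (y - c)) (x + c) := by
    intro x
    by_cases hx : x + c ∈ B
    · simp [Set.indicator, Set.mem_preimage, hx, add_sub_cancel_right]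
    · simp [Set.indicator, Set.mem_preimage, hx]
  calc ∫⁻ x in (fun x : ℝ => x + c) ⁻¹' B, g x ∂volume
      = ∫⁻ x, ((fun x : ℝ => x + c) ⁻¹' B).indicator g x ∂volume := by
        rw [lintegral_indicator hpre]
    _ = ∫⁻ x, B.indicator (fun y => g (y - c)) (x + c) ∂volume := by
        simp_rw [key]
    _ = ∫⁻ y, B.indicator (fun y => g (y - c)) y ∂volume :=
        lintegral_add_right_eq_self _ c
    _ = ∫⁻ y in B, g (y - c) ∂volume := by
        rw [lintegral_indicator hB]
    _ ≤ ∫⁻ y in B, ENNReal.ofReal (Real.exp ε) * g y ∂volume := by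
        refine lintegral_mono fun y => ?_
        rw [hg, ← ENNReal.ofReal_mul (Real.exp_pos ε).le]
        exact ENNReal.ofReal_le_ofReal (gumbel_density_shift β ε hβ hε y)
    _ = ENNReal.ofReal (Real.exp ε) * ∫⁻ y in B, g y ∂volume := by
        rw [lintegral_const_mul _ hgm]


/-- Report-Noisy-Max with i.i.d. Gumbel noise of scale `2Δ/ε` (the exponential mechanism)
satisfies `ε`-DP: for score vectors `s, s'` with `|s(j) − s'(j)| ≤ Δ` for all `j`, the
probability that candidate `i` wins under `s` is at most `exp(ε)` times the probability that
it wins under `s'`. -/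
theorem report_noisy_max_gumbel_dp (m : ℕ) (hm : 1 ≤ m) (Δ ε : ℝ) (hΔ : 0 < Δ) (hε : 0 < ε)
    (s s' : Fin m → ℝ) (hsens : ∀ j, |s j - s' j| ≤ Δ) (i : Fin m) :
    (Measure.pi fun _ : Fin m => gumbelMeasure (2 * Δ / ε))
        {η : Fin m → ℝ | ∀ j, j ≠ i → s i + η i > s j + η j} ≤
      ENNReal.ofReal (Real.exp ε) *
        (Measure.pi fun _ : Fin m => gumbelMeasure (2 * Δ / ε))
          {η : Fin m → ℝ | ∀ j, j ≠ i → s' i + η i > s' j + η j} := by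
  obtain ⟨n, rfl⟩ : ∃ n, m = n + 1 := ⟨m - 1, (Nat.succ_pred_eq_of_pos hm).symm⟩
  have hβ : (0 : ℝ) < 2 * Δ / ε := by positivity
  set β := 2 * Δ / ε with hβdef
  have hcβ : 2 * Δ = ε * β := by rw [hβdef]; field_simp
  set ν := gumbelMeasure β with hν
  set ρ := Measure.pi fun _ : Fin n => ν with hρ
  set e := MeasurableEquiv.piFinSuccAbove (fun _ : Fin (n + 1) => ℝ) i with he
  have hpres : MeasurePreserving e (Measure.pi fun _ : Fin (n + 1) => ν) (ν.prod ρ) :=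
    measurePreserving_piFinSuccAbove (fun _ => ν) i
  set S : (Fin (n + 1) → ℝ) → Set (ℝ × (Fin n → ℝ)) := fun t =>
    {p | ∀ k : Fin n, t (i.succAbove k) + p.2 k < t i + p.1} with hS
  have hSm : ∀ t, MeasurableSet (S t) := by
    intro t
    have : S t = ⋂ k : Fin n,
        {p : ℝ × (Fin n → ℝ) | t (i.succAbove k) + p.2 k < t i + p.1} := by
      ext p; simp [hS]
    rw [this]
    exact MeasurableSet.iInter fun k => measurableSet_lt (by fun_prop) (by fun_prop)
  have hcomp1 : ∀ η : Fin (n + 1) → ℝ, (e η).1 = η i := fun _ => rfl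
  have hcomp2 : ∀ (η : Fin (n + 1) → ℝ) (k : Fin n), (e η).2 k = η (i.succAbove k) :=
    fun _ _ => rfl
  have hpre : ∀ t : Fin (n + 1) → ℝ,
      {η : Fin (n + 1) → ℝ | ∀ j, j ≠ i → t i + η i > t j + η j} = e ⁻¹' S t := by
    intro t
    ext η
    simp only [Set.mem_setOf_eq, Set.mem_preimage, hS, hcomp1, hcomp2]
    constructor
    · intro h k
      have := h (i.succAbove k) (Fin.succAbove_ne i k)
      linarith
    · intro h j hj
      obtain ⟨k, rfl⟩ := Fin.exists_succAbove_eq hj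
      have := h k
      linarith
  rw [hpre s, hpre s',
    hpres.measure_preimage (hSm s).nullMeasurableSet,
    hpres.measure_preimage (hSm s').nullMeasurableSet]
  set c := 2 * Δ with hc
  set T : ℝ × (Fin n → ℝ) → ℝ × (Fin n → ℝ) := fun p => (p.1 + c, p.2) with hT
  have hTm : Measurable T := (measurable_fst.add_const c).prodMk measurable_snd
  have hsub : S s ⊆ T ⁻¹' S s' := by
    intro p hp k
    have h1 := (abs_le.mp (hsens i)).2
    have h2 := (abs_le.mp (hsens (i.succAbove k))).1
    have h3 : s (i.succAbove k) + p.2 k < s i + p.1 := hp k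
    show s' (i.succAbove k) + p.2 k < s' i + (p.1 + c)
    rw [hc]
    linarith
  set F : ℝ → ENNReal := fun x => ρ (Prod.mk x ⁻¹' S s') with hF
  have hFm : Measurable F := measurable_measure_prodMk_left (hSm s')
  calc (ν.prod ρ) (S s) ≤ (ν.prod ρ) (T ⁻¹' S s') := measure_mono hsub
    _ = ∫⁻ x, ρ (Prod.mk x ⁻¹' (T ⁻¹' S s')) ∂ν := Measure.prod_apply (hTm (hSm s'))
    _ = ∫⁻ x, F (x + c) ∂ν := rfl
    _ = ∫⁻ y, F y ∂(Measure.map (fun x : ℝ => x + c) ν) :=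
        (lintegral_map hFm (measurable_add_const c)).symm
    _ ≤ ∫⁻ y, F y ∂(ENNReal.ofReal (Real.exp ε) • ν) := by
        refine lintegral_mono' ?_ le_rfl
        rw [hcβ]
        exact gumbel_map_le β ε hβ hε.le
    _ = ENNReal.ofReal (Real.exp ε) * ∫⁻ y, F y ∂ν := lintegral_smul_measure _ _
    _ = ENNReal.ofReal (Real.exp ε) * (ν.prod ρ) (S s') := by
        rw [Measure.prod_apply (hSm s')]
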